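/- Next-Closure for semilattices: Let a ∈ L and suppose a is not the maximum of L with respect to the lectic order <. Then the immediate successor a⁺ of a with respect to < equals a ⊕ i, where i ∈ I is maximal (with respect to <_I) such that a <_i a ⊕ i. -/
import Mathlib


open scoped Classical

variable {L ι : Type*}

/-- Δ_{a,b}: indices whose generator is below exactly one of `a`, `b`. -/
def Delta [SemilatticeSup L] (x : ι → L) (a b : L) : Set ι :=
  {j | (x j ≤ a ∧ ¬ x j ≤ b) ∨ (¬ x j ≤ a ∧ x j ≤ b)}

/-- `a <_i b`: `i` is the minimum of `Δ_{a,b}` and `x i ≤ b`. -/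
def LtAt [SemilatticeSup L] [LinearOrder ι] (x : ι → L) (a b : L) (i : ι) : Prop :=
  i ∈ Delta x a b ∧ (∀ j ∈ Delta x a b, i ≤ j) ∧ x i ≤ b

/-- The lectic strict order: `a < b` iff `a <_i b` for some `i`. -/
def LexLt [SemilatticeSup L] [LinearOrder ι] (x : ι → L) (a b : L) : Prop :=
  ∃ i, LtAt x a b i

/-- The (reflexive) lectic order. -/
def LexLe [SemilatticeSup L] [LinearOrder ι] (x : ι → L) (a b : L) : Prop :=
  a = b ∨ LexLt x a b

/-- `{x i | i}` generates `L`: every element is a join of a nonempty subfamily. -/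
def Generates [SemilatticeSup L] (x : ι → L) : Prop :=
  ∀ a : L, ∃ s : Finset ι, ∃ h : s.Nonempty, a = s.sup' h x

/-- `a ⊕ i = (⋁_{j <_I i, x j ≤ a} x j) ∨ x i`. -/
noncomputable def oplus [SemilatticeSup L] [LinearOrder ι] [Fintype ι]
    (x : ι → L) (a : L) (i : ι) : L :=
  (insert i (Finset.univ.filter fun j => j < i ∧ x j ≤ a)).sup'
    (Finset.insert_nonempty _ _) x


section Aux

variable [SemilatticeSup L] [LinearOrder ι] [Fintype ι] (x : ι → L)

lemma le_of_gen (hgen : Generates x) {a b : L} (h : ∀ j, x j ≤ a → x j ≤ b) :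
    a ≤ b := by
  obtain ⟨s, hs, ha⟩ := hgen a
  have : s.sup' hs x ≤ b :=
    Finset.sup'_le _ _ fun j hj => h j (ha ▸ Finset.le_sup' x hj)
  exact ha ▸ this

lemma lexLt_of_le (hgen : Generates x) {a b : L} (hab : a ≤ b) (hne : a ≠ b) :
    LexLt x a b := by
  have hD : ∃ j, j ∈ Delta x a b := by
    by_contra h
    push_neg at h
    apply hne
    have hiff : ∀ j, x j ≤ a ↔ x j ≤ b := by
      intro j
      have := h j
      simp only [Delta, Set.mem_setOf_eq] at this
      tauto
    exact le_antisymm (le_of_gen x hgen fun j hj => (hiff j).1 hj)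
      (le_of_gen x hgen fun j hj => (hiff j).2 hj)
  classical
  set T : Finset ι := Finset.univ.filter (fun j => j ∈ Delta x a b) with hT
  have hTne : T.Nonempty := by
    obtain ⟨j, hj⟩ := hD
    exact ⟨j, by simp [hT, hj]⟩
  set i := T.min' hTne with hi
  have hiD : i ∈ Delta x a b := by
    have := T.min'_mem hTne
    simpa [hT] using this
  have hxb : x i ≤ b := by
    rcases hiD with ⟨h1, h2⟩ | ⟨_, h2⟩
    · exact absurd (le_trans h1 hab) h2
    · exact h2
  refine ⟨i, hiD, fun j hj => T.min'_le j (by simp [hT, hj]), hxb⟩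

lemma le_oplus_self (a : L) (i : ι) : x i ≤ oplus x a i :=
  Finset.le_sup' x (Finset.mem_insert_self _ _)

lemma le_oplus_of (a : L) {i j : ι} (hji : j < i) (hja : x j ≤ a) :
    x j ≤ oplus x a i :=
  Finset.le_sup' x (Finset.mem_insert_of_mem (by simp [hji, hja]))

lemma oplus_le {a b : L} {i : ι} (hib : x i ≤ b)
    (h : ∀ j, j < i → x j ≤ a → x j ≤ b) : oplus x a i ≤ b := by
  apply Finset.sup'_le
  intro j hj
  rcases Finset.mem_insert.1 hj with rfl | hj
  · exact hib
  · simp only [Finset.mem_filter] at hj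
    exact h j hj.2.1 hj.2.2

/-- Claim A : if `a <_i b` then `a <_i (a ⊕ i)` and `a ⊕ i ≤ b`. -/
lemma ltAt_oplus {a b : L} {i : ι} (h : LtAt x a b i) :
    LtAt x a (oplus x a i) i ∧ oplus x a i ≤ b := by
  obtain ⟨hiD, hmin, hxib⟩ := h
  have hxia : ¬ x i ≤ a := by
    rcases hiD with ⟨_, h2⟩ | ⟨h1, _⟩
    · exact absurd hxib h2
    · exact h1
  have hnotD : ∀ j, j < i → j ∉ Delta x a b := fun j hji hj =>
    absurd (hmin j hj) (not_le.2 hji)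
  have hiffb : ∀ j, j < i → (x j ≤ a ↔ x j ≤ b) := by
    intro j hji
    have := hnotD j hji
    simp only [Delta, Set.mem_setOf_eq] at this
    tauto
  have hle : oplus x a i ≤ b :=
    oplus_le x hxib fun j hji hja => (hiffb j hji).1 hja
  refine ⟨⟨Or.inr ⟨hxia, le_oplus_self x a i⟩, ?_, le_oplus_self x a i⟩, hle⟩
  intro j hj
  by_contra hij
  push_neg at hij
  rcases hj with ⟨h1, h2⟩ | ⟨h1, h2⟩
  · exact h2 (le_oplus_of x a hij h1)
  · exact h1 ((hiffb j hij).2 (le_trans h2 hle))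

/-- Cross lemma: `a <_i b`, `a <_j c`, `i < j` imply `c <_i b`. -/
lemma ltAt_cross {a b c : L} {i j : ι} (hib : LtAt x a b i)
    (hjc : LtAt x a c j) (hij : i < j) : LtAt x c b i := by
  obtain ⟨hiD, hminb, hxib⟩ := hib
  obtain ⟨hjD, hminc, hxjc⟩ := hjc
  have hxia : ¬ x i ≤ a := by
    rcases hiD with ⟨_, h2⟩ | ⟨h1, _⟩
    · exact absurd hxib h2
    · exact h1
  have hiNc : i ∉ Delta x a c := fun h => absurd (hminc i h) (not_le.2 hij)
  have hxic : ¬ x i ≤ c := by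
    simp only [Delta, Set.mem_setOf_eq] at hiNc
    tauto
  refine ⟨Or.inr ⟨hxic, hxib⟩, ?_, hxib⟩
  intro k hk
  by_contra hki
  push_neg at hki
  have hkNb : k ∉ Delta x a b := fun h => absurd (hminb k h) (not_le.2 hki)
  have hkNc : k ∉ Delta x a c := fun h =>
    absurd (hminc k h) (not_le.2 (lt_trans hki hij))
  simp only [Delta, Set.mem_setOf_eq] at hk hkNb hkNc
  tauto

end Aux

/-- Next-Closure for semilattices: the immediate successor of a in the lectic
order is a ⊕ i, where i is maximal with a <_i a ⊕ i. -/
theorem next_closure [SemilatticeSup L] [Fintype L] [LinearOrder ι] [Fintype ι]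
    (x : ι → L) (hgen : Generates x) (a : L)
    (hnotmax : ∃ b, LexLt x a b) :
    ∃ i : ι, LtAt x a (oplus x a i) i ∧
      (∀ j : ι, LtAt x a (oplus x a j) j → j ≤ i) ∧
      LexLt x a (oplus x a i) ∧
      (∀ b : L, LexLt x a b → LexLe x (oplus x a i) b) := by
  classical
  set S : Finset ι := Finset.univ.filter (fun i => LtAt x a (oplus x a i) i)
    with hS
  have hSne : S.Nonempty := by
    obtain ⟨b, i, hi⟩ := hnotmax
    exact ⟨i, by simp [hS, (ltAt_oplus x hi).1]⟩
  set i := S.max' hSne with hidef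
  have h1 : LtAt x a (oplus x a i) i := by
    have := S.max'_mem hSne
    simpa [hS] using this
  have h2 : ∀ j : ι, LtAt x a (oplus x a j) j → j ≤ i := fun j hj =>
    S.le_max' j (by simp [hS, hj])
  refine ⟨i, h1, h2, ⟨i, h1⟩, ?_⟩
  rintro b ⟨k, hk⟩
  obtain ⟨hko, hkle⟩ := ltAt_oplus x hk
  have hki : k ≤ i := h2 k hko
  rcases eq_or_lt_of_le hki with heq | hlt
  · rw [← heq]
    by_cases heqb : oplus x a k = b
    · exact Or.inl heqb
    · exact Or.inr (lexLt_of_le x hgen hkle heqb)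
  · exact Or.inr ⟨k, ltAt_cross x hk h1 hlt⟩
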